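/- Let S be a semigroup satisfying the Strong Følner Condition and let F be a Følner net in P_f(S). Then for every A ⊆ S, the upper Banach density d*_F(A) is at most the Følner density d_{Fø}(A). -/

import Mathlib

open scoped Classical symmDiff

/-- The translate `F · s` of a finite piece `F` by an element of `S ∪ {1}`
(`none` meaning "no shift"). -/
def netShift {S : Type*} [Mul S] (F : Set S) : Option S → Set S
  | none => F
  | some t => (· * t) '' F

/-- Upper Banach density of `A ⊆ S` with respect to a net `F = ⟨F i⟩` of finite
nonempty subsets of `S`, indexed by a directed preorder `I`. -/
noncomputable def uBD {S : Type*} [Mul S] {I : Type*} [Preorder I]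
    (F : I → Set S) (A : Set S) : ℝ :=
  sSup {α : ℝ | ∀ i₀ : I, ∃ i, i₀ ≤ i ∧ ∃ s : Option S,
    α * ((F i).ncard : ℝ) ≤ ((A ∩ netShift (F i) s).ncard : ℝ)}

/-- The Følner density of `A ⊆ S`. -/
noncomputable def folnerDensity {S : Type*} [Mul S] (A : Set S) : ℝ :=
  sSup {α : ℝ | ∀ H : Finset S, ∀ ε : ℝ, 0 < ε → ∃ K : Set S, K.Finite ∧ K.Nonempty ∧
    (∀ s ∈ H, ((K ∆ ((s * ·) '' K)).ncard : ℝ) < ε * K.ncard) ∧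
    α * (K.ncard : ℝ) ≤ ((A ∩ K).ncard : ℝ)}

private lemma netShift_finite {S : Type*} [Mul S] {F : Set S} (hF : F.Finite) (s : Option S) :
    (netShift F s).Finite := by
  cases s with
  | none => exact hF
  | some t => exact hF.image _

private lemma netShift_ncard_le {S : Type*} [Mul S] {F : Set S} (hF : F.Finite) (s : Option S) :
    (netShift F s).ncard ≤ F.ncard := by
  cases s with
  | none => exact le_rfl
  | some t => exact Set.ncard_image_le hF

theorem uBD_le_folnerDensity {S : Type*} [Semigroup S]
    {I : Type*} [Preorder I] [Nonempty I] (F : I → Set S)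
    (hfin : ∀ i, (F i).Finite) (hne : ∀ i, (F i).Nonempty)
    (hdir : ∀ i j : I, ∃ k, i ≤ k ∧ j ≤ k)
    (hSFC : ∀ H : Finset S, ∀ ε : ℝ, 0 < ε → ∃ K : Set S, K.Finite ∧ K.Nonempty ∧
      ∀ s ∈ H, ((K ∆ ((s * ·) '' K)).ncard : ℝ) < ε * K.ncard)
    (hFolner : ∀ s : S, Filter.Tendsto
      (fun i => ((((s * ·) '' F i) ∆ F i).ncard : ℝ) / ((F i).ncard : ℝ))
      Filter.atTop (nhds 0))
    (A : Set S) :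
    uBD F A ≤ folnerDensity A := by
  haveI : IsDirected I (· ≤ ·) := ⟨hdir⟩
  have hFpos : ∀ i, (0 : ℝ) < ((F i).ncard : ℝ) := fun i => by
    exact_mod_cast ((hne i).ncard_pos (hfin i))
  -- the Følner density set contains 0 and is bounded above by 1
  have h0mem : (0 : ℝ) ∈ {α : ℝ | ∀ H : Finset S, ∀ ε : ℝ, 0 < ε → ∃ K : Set S,
      K.Finite ∧ K.Nonempty ∧
      (∀ s ∈ H, ((K ∆ ((s * ·) '' K)).ncard : ℝ) < ε * K.ncard) ∧
      0 * (K.ncard : ℝ) ≤ ((A ∩ K).ncard : ℝ)} := by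
    intro H ε hε
    obtain ⟨K, hKfin, hKne, hK⟩ := hSFC H ε hε
    exact ⟨K, hKfin, hKne, hK, by simp⟩
  have hbdd : BddAbove {α : ℝ | ∀ H : Finset S, ∀ ε : ℝ, 0 < ε → ∃ K : Set S,
      K.Finite ∧ K.Nonempty ∧
      (∀ s ∈ H, ((K ∆ ((s * ·) '' K)).ncard : ℝ) < ε * K.ncard) ∧
      α * (K.ncard : ℝ) ≤ ((A ∩ K).ncard : ℝ)} := by
    refine ⟨1, fun α hα => ?_⟩
    obtain ⟨K, hKfin, hKne, -, hle⟩ := hα ∅ 1 one_pos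
    have hKpos : (0 : ℝ) < (K.ncard : ℝ) := by exact_mod_cast hKne.ncard_pos hKfin
    have : ((A ∩ K).ncard : ℝ) ≤ (K.ncard : ℝ) := by
      exact_mod_cast Set.ncard_le_ncard Set.inter_subset_right hKfin
    nlinarith
  have hfd0 : (0 : ℝ) ≤ folnerDensity A := le_csSup hbdd h0mem
  refine Real.sSup_le (fun α hα => ?_) hfd0
  rcases le_or_gt α 0 with hα0 | hα0
  · exact hα0.trans hfd0
  -- α is positive; show α is in the Følner density set
  have hα1 : α ≤ 1 := by
    obtain ⟨i, -, s, hs⟩ := hα (Classical.arbitrary I)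
    have h1 : ((A ∩ netShift (F i) s).ncard : ℝ) ≤ ((F i).ncard : ℝ) := by
      exact_mod_cast le_trans
        (Set.ncard_le_ncard Set.inter_subset_right (netShift_finite (hfin i) s))
        (netShift_ncard_le (hfin i) s)
    nlinarith [hFpos i, hs]
  apply le_csSup hbdd
  intro H ε hε
  have hδ : (0 : ℝ) < ε * α := mul_pos hε hα0
  -- find i₀ past which all translates in H are ε·α-Følner
  have hev : ∀ᶠ i in Filter.atTop, ∀ u ∈ H,
      ((((u * ·) '' F i) ∆ F i).ncard : ℝ) < ε * α * ((F i).ncard : ℝ) := by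
    rw [Filter.eventually_all_finset]
    intro u _
    filter_upwards [(hFolner u).eventually_lt_const hδ] with i hi
    have := (div_lt_iff₀ (hFpos i)).mp hi
    linarith
  obtain ⟨i₀, -, hi₀⟩ := Filter.atTop_basis.eventually_iff.mp hev
  obtain ⟨i, hii₀, s, hs⟩ := hα i₀
  have hiF : ∀ u ∈ H, ((((u * ·) '' F i) ∆ F i).ncard : ℝ) < ε * α * ((F i).ncard : ℝ) :=
    hi₀ hii₀
  refine ⟨netShift (F i) s, netShift_finite (hfin i) s, ?_, ?_, ?_⟩
  · -- nonempty
    cases s with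
    | none => exact hne i
    | some t => exact (hne i).image _
  · -- Følner condition for the translate
    intro u hu
    have hkey : ((netShift (F i) s ∆ ((u * ·) '' netShift (F i) s)).ncard : ℝ)
        < ε * α * ((F i).ncard : ℝ) := by
      cases s with
      | none =>
        calc ((F i ∆ ((u * ·) '' F i)).ncard : ℝ)
            = ((((u * ·) '' F i) ∆ F i).ncard : ℝ) := by rw [symmDiff_comm]
          _ < ε * α * ((F i).ncard : ℝ) := hiF u hu
      | some t =>
        have hsd : (F i ∆ ((u * ·) '' F i)).Finite := by
          rw [Set.symmDiff_def]
          exact ((hfin i).sdiff).union (((hfin i).image _).sdiff)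
        have himg : ((· * t) '' F i) ∆ ((u * ·) '' ((· * t) '' F i))
            ⊆ (· * t) '' (F i ∆ ((u * ·) '' F i)) := by
          have : (u * ·) '' ((· * t) '' F i) = (· * t) '' ((u * ·) '' F i) := by
            rw [← Set.image_comp, ← Set.image_comp]
            exact Set.image_congr fun x _ => (mul_assoc u x t).symm
          rw [this]
          intro x hx
          rcases Set.mem_symmDiff.mp hx with ⟨⟨y, hy, rfl⟩, hn⟩ | ⟨⟨y, hy, rfl⟩, hn⟩
          · exact ⟨y, Set.mem_symmDiff.mpr (Or.inl ⟨hy, fun h => hn ⟨y, h, rfl⟩⟩), rfl⟩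
          · exact ⟨y, Set.mem_symmDiff.mpr (Or.inr ⟨hy, fun h => hn ⟨y, h, rfl⟩⟩), rfl⟩
        have h1 : ((((· * t) '' F i) ∆ ((u * ·) '' ((· * t) '' F i))).ncard : ℝ)
            ≤ (((· * t) '' (F i ∆ ((u * ·) '' F i))).ncard : ℝ) := by
          exact_mod_cast Set.ncard_le_ncard himg
            ((hsd).image _)
        have h2 : (((· * t) '' (F i ∆ ((u * ·) '' F i))).ncard : ℝ)
            ≤ ((F i ∆ ((u * ·) '' F i)).ncard : ℝ) := by
          exact_mod_cast Set.ncard_image_le (hsd)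
        have h3 : ((F i ∆ ((u * ·) '' F i)).ncard : ℝ)
            = ((((u * ·) '' F i) ∆ F i).ncard : ℝ) := by rw [symmDiff_comm]
        calc ((((· * t) '' F i) ∆ ((u * ·) '' ((· * t) '' F i))).ncard : ℝ)
            ≤ ((F i ∆ ((u * ·) '' F i)).ncard : ℝ) := h1.trans h2
          _ = ((((u * ·) '' F i) ∆ F i).ncard : ℝ) := h3
          _ < ε * α * ((F i).ncard : ℝ) := hiF u hu
    have hK2 : α * ((F i).ncard : ℝ) ≤ ((netShift (F i) s).ncard : ℝ) := by
      refine hs.trans ?_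
      exact_mod_cast Set.ncard_le_ncard Set.inter_subset_right (netShift_finite (hfin i) s)
    calc ((netShift (F i) s ∆ ((u * ·) '' netShift (F i) s)).ncard : ℝ)
        < ε * α * ((F i).ncard : ℝ) := hkey
      _ = ε * (α * ((F i).ncard : ℝ)) := by ring
      _ ≤ ε * ((netShift (F i) s).ncard : ℝ) := by nlinarith
  · -- density bound
    have h1 : ((netShift (F i) s).ncard : ℝ) ≤ ((F i).ncard : ℝ) := by
      exact_mod_cast netShift_ncard_le (hfin i) s
    have := hs
    nlinarith
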